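/- Let X be a real Banach space, S₁,…,S_l and T_i (i ∈ I₀, a nonempty finite index set) be nonempty convex weak*-compact subsets of X*. Then there exists h̄ ∈ X with ⟨v, h̄⟩ = 0 for all v ∈ S_j and all j = 1,…,l and ⟨v, h̄⟩ < 0 for all v ∈ T_i and all i ∈ I₀, if and only if conv(⋃_{i∈I₀} T_i) ∩ cl_{w*}(span(⋃_{j=1}^{l} S_j)) = ∅, where cl_{w*} denotes closure in the weak* topology of X* and conv the convex hull. -/

import Mathlib

open Filter Topology Set Pointwise

/-- A set of continuous linear functionals is weak* compact. -/
def WeakStarCompact {X : Type*} [NormedAddCommGroup X] [NormedSpace ℝ X]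
    (A : Set (X →L[ℝ] ℝ)) : Prop :=
  IsCompact ((fun v : X →L[ℝ] ℝ => (StrongDual.toWeakDual v : WeakDual ℝ X)) '' A)

section Aux
variable {E : Type*} [AddCommGroup E] [Module ℝ E] [TopologicalSpace E]
  [IsTopologicalAddGroup E] [ContinuousSMul ℝ E]

lemma myIsCompact_convexJoin {s t : Set E} (hs : IsCompact s) (ht : IsCompact t) :
    IsCompact (convexJoin ℝ s t) := by
  have key : convexJoin ℝ s t =
      (fun p : (ℝ × ℝ) × E × E => p.1.1 • p.2.1 + p.1.2 • p.2.2) ''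
        ({p : ℝ × ℝ | 0 ≤ p.1 ∧ 0 ≤ p.2 ∧ p.1 + p.2 = 1} ×ˢ s ×ˢ t) := by
    ext x
    constructor
    · rw [mem_convexJoin]
      rintro ⟨a, ha, b, hb, θ₁, θ₂, h1, h2, h3, rfl⟩
      exact ⟨((θ₁, θ₂), a, b), ⟨⟨h1, h2, h3⟩, ha, hb⟩, rfl⟩
    · rintro ⟨⟨⟨θ₁, θ₂⟩, a, b⟩, ⟨⟨h1, h2, h3⟩, ha, hb⟩, rfl⟩
      rw [mem_convexJoin]
      exact ⟨a, ha, b, hb, θ₁, θ₂, h1, h2, h3, rfl⟩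
  rw [key]
  have hcW : IsCompact {p : ℝ × ℝ | 0 ≤ p.1 ∧ 0 ≤ p.2 ∧ p.1 + p.2 = 1} := by
    have hsub : {p : ℝ × ℝ | 0 ≤ p.1 ∧ 0 ≤ p.2 ∧ p.1 + p.2 = 1} ⊆
        Set.Icc (0, 0) (1, 1) := by
      rintro ⟨x, y⟩ ⟨h1, h2, h3⟩
      constructor
      · exact ⟨h1, h2⟩
      · constructor <;> simp only [] <;> linarith
    refine (isCompact_Icc).of_isClosed_subset ?_ hsub
    have : {p : ℝ × ℝ | 0 ≤ p.1 ∧ 0 ≤ p.2 ∧ p.1 + p.2 = 1} =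
        {p : ℝ × ℝ | 0 ≤ p.1} ∩ ({p | 0 ≤ p.2} ∩ {p | p.1 + p.2 = 1}) := by
      ext p; simp [and_assoc]
    rw [this]
    exact (isClosed_le continuous_const continuous_fst).inter
      ((isClosed_le continuous_const continuous_snd).inter
        (isClosed_eq (continuous_fst.add continuous_snd) continuous_const))
  refine ((hcW.prod (hs.prod ht)).image ?_)
  exact ((continuous_fst.fst).smul (continuous_snd.fst)).add
    ((continuous_fst.snd).smul (continuous_snd.snd))

lemma myIsCompact_convexHull_iUnion {ι : Type*} [Fintype ι] [Nonempty ι]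
    (K : ι → Set E) (hcomp : ∀ i, IsCompact (K i)) (hconv : ∀ i, Convex ℝ (K i))
    (hne : ∀ i, (K i).Nonempty) :
    IsCompact (convexHull ℝ (⋃ i, K i)) := by
  have main : ∀ s : Finset ι, s.Nonempty → IsCompact (convexHull ℝ (⋃ i ∈ s, K i)) := by
    intro s hsne
    induction hsne using Finset.Nonempty.cons_induction with
    | singleton a => simpa [(hconv a).convexHull_eq] using hcomp a
    | cons a s ha hs ih =>
        have : (⋃ i ∈ Finset.cons a s ha, K i) = K a ∪ ⋃ i ∈ s, K i := by
          simp [Finset.cons_eq_insert, Set.biUnion_insert]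
        have h2ne : (⋃ i ∈ s, K i).Nonempty :=
          (hne hs.choose).mono (Set.subset_biUnion_of_mem hs.choose_spec)
        rw [this, convexHull_union (hne a) h2ne, (hconv a).convexHull_eq]
        exact myIsCompact_convexJoin (hcomp a) ih
  have := main Finset.univ Finset.univ_nonempty
  simpa using this
end Aux


lemma weakDual_functional_exists_eval {X : Type*} [NormedAddCommGroup X] [NormedSpace ℝ X]
    (φ : WeakDual ℝ X →L[ℝ] ℝ) : ∃ h : X, ∀ v : WeakDual ℝ X, φ v = v h := by
  have h1 : φ ⁻¹' (Set.Ioo (-1 : ℝ) 1) ∈ 𝓝 (0 : WeakDual ℝ X) := by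
    have hmem : Set.Ioo (-1 : ℝ) 1 ∈ 𝓝 (φ 0) := by
      rw [map_zero]; exact Ioo_mem_nhds (by norm_num) (by norm_num)
    exact φ.continuous.continuousAt.preimage_mem_nhds hmem
  have hnh : (𝓝 (0 : WeakDual ℝ X)) =
      Filter.comap (fun (v : WeakDual ℝ X) (x : X) => v x) (𝓝 (fun _ : X => (0 : ℝ))) :=
    nhds_induced _ _
  rw [hnh, Filter.mem_comap] at h1
  obtain ⟨U, hU, hUsub⟩ := h1
  rw [nhds_pi, Filter.mem_pi] at hU
  obtain ⟨I, hIfin, t, ht, hIpi⟩ := hU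
  have key : ∀ v : WeakDual ℝ X, (∀ x ∈ I, v x = 0) → φ v = 0 := by
    intro v hv
    by_contra hne
    have hc : ∀ c : ℝ, φ (c • v) ∈ Set.Ioo (-1 : ℝ) 1 := by
      intro c
      apply hUsub
      apply hIpi
      intro x hx
      have : (c • v) x = 0 := by
        show c • v x = 0; rw [hv x hx, smul_zero]
      show (c • v) x ∈ t x
      rw [this]
      exact mem_of_mem_nhds (ht x)
    have h2 := hc (2 / φ v)
    rw [map_smul, smul_eq_mul, div_mul_cancel₀ 2 hne] at h2
    norm_num [Set.mem_Ioo] at h2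
  haveI : Finite ↥I := hIfin.to_subtype
  let L : ↥I → (WeakDual ℝ X) →ₗ[ℝ] ℝ := fun x =>
    { toFun := fun v => v (x : X)
      map_add' := fun a b => rfl
      map_smul' := fun c a => rfl }
  have hker : ⨅ x : ↥I, LinearMap.ker (L x) ≤ LinearMap.ker (φ : WeakDual ℝ X →ₗ[ℝ] ℝ) := by
    intro v hv
    rw [Submodule.mem_iInf] at hv
    exact LinearMap.mem_ker.2 (key v fun x hx => hv ⟨x, hx⟩)
  have hspan := mem_span_of_iInf_ker_le_ker hker
  haveI := hIfin.fintype
  obtain ⟨c, hc⟩ := (Submodule.mem_span_range_iff_exists_fun ℝ).1 hspan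
  refine ⟨∑ x : ↥I, c x • (x : X), fun v => ?_⟩
  have := congrArg (fun K : WeakDual ℝ X →ₗ[ℝ] ℝ => K v) hc
  simp only [LinearMap.sum_apply, LinearMap.smul_apply] at this
  rw [ContinuousLinearMap.coe_coe] at this
  rw [← this, map_sum]
  simp [L, smul_eq_mul]
  rfl

/-- for nonempty convex weak*-compact sets `S₁,…,S_l` and `T_i` (`i ∈ I₀`) in
`X*`, a direction `h̄` annihilating all the `Sⱼ` and strictly separating the `T_i` from zero
exists iff the convex hull of `⋃ T_i` does not meet the weak*-closure of the span of `⋃ Sⱼ`. -/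
theorem direction_iff_weakStar_separation
    {X : Type*} [NormedAddCommGroup X] [NormedSpace ℝ X] [CompleteSpace X]
    (l : ℕ) {ι : Type*} [Fintype ι] [Nonempty ι]
    (S : Fin l → Set (X →L[ℝ] ℝ)) (T : ι → Set (X →L[ℝ] ℝ))
    (hSne : ∀ j, (S j).Nonempty) (hSconv : ∀ j, Convex ℝ (S j))
    (hScomp : ∀ j, WeakStarCompact (S j))
    (hTne : ∀ i, (T i).Nonempty) (hTconv : ∀ i, Convex ℝ (T i))
    (hTcomp : ∀ i, WeakStarCompact (T i)) :
    (∃ hb : X,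
      (∀ j : Fin l, ∀ v ∈ S j, v hb = 0) ∧
      (∀ i : ι, ∀ v ∈ T i, v hb < 0)) ↔
    ((fun v : X →L[ℝ] ℝ => (StrongDual.toWeakDual v : WeakDual ℝ X)) ''
        convexHull ℝ (⋃ i : ι, T i)) ∩
      closure ((fun v : X →L[ℝ] ℝ => (StrongDual.toWeakDual v : WeakDual ℝ X)) ''
        (Submodule.span ℝ (⋃ j : Fin l, S j) : Set (X →L[ℝ] ℝ))) = ∅ := by
  set D : (X →L[ℝ] ℝ) → WeakDual ℝ X :=
    fun v : X →L[ℝ] ℝ => (StrongDual.toWeakDual v : WeakDual ℝ X) with hD_def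
  have hD : IsLinearMap ℝ D := ⟨fun a b => map_add _ a b, fun c a => map_smul _ c a⟩
  constructor
  · rintro ⟨h, hS, hT⟩
    rw [Set.eq_empty_iff_forall_notMem]
    rintro w ⟨⟨u, hu, rfl⟩, hw2⟩
    have hhalf : convexHull ℝ (⋃ i, T i) ⊆ {u : X →L[ℝ] ℝ | u h < 0} := by
      apply convexHull_min
      · intro u hu
        rw [Set.mem_iUnion] at hu
        obtain ⟨i, hi⟩ := hu
        exact hT i u hi
      · exact convex_halfSpace_lt ⟨fun a b => rfl, fun c a => rfl⟩ 0
    have hneg : u h < 0 := hhalf hu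
    have hspan0 : ∀ u' ∈ Submodule.span ℝ (⋃ j, S j), (u' : X →L[ℝ] ℝ) h = 0 := by
      intro u' hu'
      induction hu' using Submodule.span_induction with
      | mem x hx =>
          rw [Set.mem_iUnion] at hx
          obtain ⟨j, hj⟩ := hx
          exact hS j x hj
      | zero => rfl
      | add x y _ _ hx hy => rw [ContinuousLinearMap.add_apply, hx, hy, add_zero]
      | smul c x _ hx => rw [ContinuousLinearMap.smul_apply, hx, smul_zero]
    have hsub : (D '' (Submodule.span ℝ (⋃ j, S j) : Set (X →L[ℝ] ℝ))) ⊆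
        {w : WeakDual ℝ X | w h = 0} := by
      rintro _ ⟨u', hu', rfl⟩
      exact hspan0 u' hu'
    have hclosed : IsClosed {w : WeakDual ℝ X | w h = 0} :=
      isClosed_eq (WeakDual.eval_continuous h) continuous_const
    have h0 : (D u) h = 0 := closure_minimal hsub hclosed hw2
    have : u h = 0 := h0
    linarith
  · intro hdisj
    let Dl : (X →L[ℝ] ℝ) →ₗ[ℝ] WeakDual ℝ X :=
      (StrongDual.toWeakDual : (X →L[ℝ] ℝ) ≃ₗ[ℝ] WeakDual ℝ X).toLinearMap
    set N : Submodule ℝ (WeakDual ℝ X) :=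
      ((Submodule.span ℝ (⋃ j, S j)).map Dl).topologicalClosure with hN_def
    have hNcoe : (N : Set (WeakDual ℝ X)) =
        closure (D '' (Submodule.span ℝ (⋃ j, S j) : Set (X →L[ℝ] ℝ))) := by
      rw [hN_def, Submodule.topologicalClosure_coe, Submodule.map_coe]
      rfl
    set C : Set (WeakDual ℝ X) := convexHull ℝ (⋃ i, D '' T i) with hC_def
    have hCeq : D '' (convexHull ℝ (⋃ i, T i)) = C := by
      rw [hC_def, hD.image_convexHull, Set.image_iUnion]
    have hCcomp : IsCompact C :=
      myIsCompact_convexHull_iUnion (fun i => D '' T i) (fun i => hTcomp i)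
        (fun i => (hTconv i).is_linear_image hD) (fun i => (hTne i).image D)
    have hCconv : Convex ℝ C := convex_convexHull ℝ _
    have hdisj2 : Disjoint (N : Set (WeakDual ℝ X)) C := by
      rw [Set.disjoint_iff_inter_eq_empty, hNcoe, ← hCeq, Set.inter_comm]
      exact hdisj
    haveI : LocallyConvexSpace ℝ (WeakDual ℝ X) :=
      WeakBilin.locallyConvexSpace (B := topDualPairing ℝ X)
    obtain ⟨f, u, v', hfN, huv, hfC⟩ :=
      geometric_hahn_banach_closed_compact N.convex
        (Submodule.isClosed_topologicalClosure _) hCconv hCcomp hdisj2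
    have hf0 : ∀ w ∈ N, f w = 0 := by
      intro w hw
      by_contra hne
      have hm : ((|u| + 1) / f w) • w ∈ N := N.smul_mem _ hw
      have := hfN _ hm
      rw [map_smul, smul_eq_mul, div_mul_cancel₀ _ hne] at this
      have : |u| + 1 < u := this
      have := abs_nonneg u
      have := le_abs_self u
      linarith
    have hu0 : 0 < u := by
      have h1 := hfN 0 N.zero_mem
      rwa [map_zero] at h1
    obtain ⟨h0, hh0⟩ := weakDual_functional_exists_eval f
    refine ⟨-h0, ?_, ?_⟩
    · intro j v hv
      have hvN : D v ∈ N :=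
        Submodule.le_topologicalClosure _
          (Submodule.mem_map_of_mem (Submodule.subset_span (Set.mem_iUnion.2 ⟨j, hv⟩)))
      have h1 : f (D v) = 0 := hf0 _ hvN
      have h2 : (D v) h0 = 0 := by rw [← hh0]; exact h1
      have h3 : v h0 = 0 := h2
      rw [map_neg, h3, neg_zero]
    · intro i v hv
      have hvC : D v ∈ C :=
        subset_convexHull ℝ _ (Set.mem_iUnion.2 ⟨i, Set.mem_image_of_mem D hv⟩)
      have h1 : 0 < f (D v) := lt_trans (lt_trans hu0 huv) (hfC _ hvC)
      have h2 : (0 : ℝ) < v h0 := by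
        have : f (D v) = (D v) h0 := hh0 _
        rw [this] at h1
        exact h1
      rw [map_neg]
      linarith
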